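/- CIEL fails to be compact: there exist an unsatisfiable set of CIEL formulae all of whose finite subsets are satisfiable, namely the set consisting of ¬C_{A∨B} p together with all formulae C_{D_1} C_{D_2} ⋯ C_{D_n} p for n ≥ 0 and D_1,…,D_n ∈ {A,B}, where A, B are atomic agent concepts and p is a world atom. -/

import Mathlib

/-- Agent formulae built from the atomic agent concepts `A`, `B` and disjunction. -/
inductive AgF9 : Type
  | A | B
  | or (ψ χ : AgF9)

/-- World formulae: the world atom `p`, negation, and common knowledge. -/
inductive WF9 : Type
  | p
  | not (φ : WF9)
  | C (ψ : AgF9) (φ : WF9)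

/-- A CIEL model (for this signature): worlds, agents, extensions of the two
atomic agent concepts, a valuation of `p`, and per-agent equivalence relations. -/
structure M9 where
  W : Type
  Agt : Type
  extA : Set Agt
  extB : Set Agt
  valp : Set W
  sim : Agt → W → W → Prop
  equiv : ∀ a, Equivalence (sim a)

/-- Extension of an agent formula. -/
def ext9 (M : M9) : AgF9 → Set M.Agt
  | .A => M.extA
  | .B => M.extB
  | .or ψ χ => ext9 M ψ ∪ ext9 M χ

/-- Satisfaction of world formulae; `C_ψ` is the box over the
reflexive-transitive closure of the union of `∼_a` over `a ∈ ⟦ψ⟧`. -/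
def sat9 (M : M9) : M.W → WF9 → Prop
  | x, .p => x ∈ M.valp
  | x, .not φ => ¬ sat9 M x φ
  | x, .C ψ φ =>
      ∀ y, Relation.ReflTransGen (fun u v => ∃ a ∈ ext9 M ψ, M.sim a u v) x y →
        sat9 M y φ

/-- `C_{D_1} C_{D_2} ⋯ C_{D_n} p`, where `true` codes `A` and `false` codes `B`. -/
def chain9 : List Bool → WF9
  | [] => .p
  | d :: ds => .C (if d then .A else .B) (chain9 ds)

/-- The set `{¬C_{A∨B} p} ∪ {C_{D_1}⋯C_{D_n} p | n ≥ 0, D_i ∈ {A,B}}`. -/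
def S9 : Set WF9 :=
  insert (.not (.C (.or .A .B) .p)) {φ | ∃ l : List Bool, φ = chain9 l}

open Relation

/-- Depth of a world formula. -/
def wd9 : WF9 → ℕ
  | .p => 0
  | .not φ => wd9 φ + 1
  | .C _ φ => wd9 φ + 1

lemma wd9_chain (l : List Bool) : wd9 (chain9 l) = l.length := by
  induction l with
  | nil => rfl
  | cons d ds ih => cases d <;> simp [chain9, wd9, ih]

/-- The countermodel for bound `N`. -/
def MN9 (N : ℕ) : M9 where
  W := ℕ
  Agt := Bool
  extA := {true}
  extB := {false}
  valp := {w | w ≤ N}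
  sim := fun a u v => cond a (u / 2 = v / 2) ((u + 1) / 2 = (v + 1) / 2)
  equiv := by
    intro a
    cases a <;> exact ⟨fun _ => rfl, Eq.symm, Eq.trans⟩

lemma rtgA9 (N : ℕ) : ∀ w z : ℕ,
    ReflTransGen (fun u v => ∃ a ∈ ext9 (MN9 N) .A, (MN9 N).sim a u v) w z →
    w / 2 = z / 2 := by
  intro w z hz
  induction hz with
  | refl => rfl
  | tail _ hstep ih =>
    obtain ⟨a, ha, hs⟩ := hstep
    simp only [MN9, ext9, Set.mem_singleton_iff] at ha hs
    subst ha
    simp only [cond] at hs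
    omega

lemma rtgB9 (N : ℕ) : ∀ w z : ℕ,
    ReflTransGen (fun u v => ∃ a ∈ ext9 (MN9 N) .B, (MN9 N).sim a u v) w z →
    (w + 1) / 2 = (z + 1) / 2 := by
  intro w z hz
  induction hz with
  | refl => rfl
  | tail _ hstep ih =>
    obtain ⟨a, ha, hs⟩ := hstep
    simp only [MN9, ext9, Set.mem_singleton_iff] at ha hs
    subst ha
    simp only [cond] at hs
    omega

lemma chain_sat9 (N : ℕ) : ∀ (l : List Bool) (w : ℕ), w + l.length ≤ N →
    sat9 (MN9 N) w (chain9 l) := by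
  intro l
  induction l with
  | nil =>
    intro w hw
    simp only [chain9, sat9, MN9, Set.mem_setOf_eq]
    omega
  | cons d ds ih =>
    intro w hw
    cases d
    · -- d = false, formula is C_B
      intro y hy
      have h := rtgB9 N w y hy
      exact ih y (by simp only [List.length_cons] at hw; omega)
    · -- d = true, formula is C_A
      intro y hy
      have h := rtgA9 N w y hy
      exact ih y (by simp only [List.length_cons] at hw; omega)

lemma reach9 (N : ℕ) : ∀ m : ℕ,
    ReflTransGen (fun u v => ∃ a ∈ ext9 (MN9 N) (.or .A .B), (MN9 N).sim a u v) (0 : ℕ) m := by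
  intro m
  induction m with
  | zero => exact ReflTransGen.refl
  | succ m ih =>
    refine ih.tail ?_
    rcases Nat.even_or_odd m with ⟨k, hk⟩ | ⟨k, hk⟩
    · refine ⟨true, Or.inl rfl, ?_⟩
      show m / 2 = (m + 1) / 2
      omega
    · refine ⟨false, Or.inr rfl, ?_⟩
      show (m + 1) / 2 = (m + 1 + 1) / 2
      omega

/-- CIEL is not compact: `S9` is unsatisfiable, but every finite subset of
`S9` is satisfiable. -/
theorem ciel_not_compact :
    (¬ ∃ (M : M9) (x : M.W), ∀ φ ∈ S9, sat9 M x φ) ∧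
    (∀ T : Finset WF9, ↑T ⊆ S9 → ∃ (M : M9) (x : M.W), ∀ φ ∈ T, sat9 M x φ) := by
  constructor
  · rintro ⟨M, x, hx⟩
    have hnot : ¬ sat9 M x (.C (.or .A .B) .p) := hx _ (Set.mem_insert _ _)
    have hnot' : ∃ y, ReflTransGen (fun u v => ∃ a ∈ ext9 M (.or .A .B), M.sim a u v) x y ∧
        ¬ sat9 M y .p := by
      by_contra h
      push_neg at h
      exact hnot fun y hy => h y hy
    obtain ⟨y, hy, hyp⟩ := hnot'
    have key : ∀ z, ReflTransGen (fun u v => ∃ a ∈ ext9 M (.or .A .B), M.sim a u v) z y →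
        ∃ l, (sat9 M z (chain9 l) → sat9 M y .p) := by
      intro z h
      induction h using ReflTransGen.head_induction_on with
      | refl => exact ⟨[], fun h => h⟩
      | head hstep _ ih =>
        obtain ⟨l, hl⟩ := ih
        obtain ⟨a, ha, hsim⟩ := hstep
        rcases ha with ha | ha
        · exact ⟨true :: l, fun h => hl (h _ (ReflTransGen.single ⟨a, ha, hsim⟩))⟩
        · exact ⟨false :: l, fun h => hl (h _ (ReflTransGen.single ⟨a, ha, hsim⟩))⟩
    obtain ⟨l, hl⟩ := key x hy
    exact hyp (hl (hx _ (Set.mem_insert_of_mem _ ⟨l, rfl⟩)))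
  · intro T hT
    set N := T.sup wd9 with hN
    refine ⟨MN9 N, (0 : ℕ), ?_⟩
    intro φ hφ
    rcases hT hφ with h | ⟨l, rfl⟩
    · subst h
      intro hc
      have := hc (N + 1) (reach9 N (N + 1))
      simp only [sat9, MN9, Set.mem_setOf_eq] at this
      exact absurd (this : N + 1 ≤ N) (Nat.not_succ_le_self N)
    · have hlen : l.length ≤ N := by
        have := Finset.le_sup (f := wd9) hφ
        rwa [wd9_chain] at this
      exact chain_sat9 N l 0 (by omega)
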